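/- Let M : A ⥤ B be a functor from a discrete category A into a componental category B such that the image of M is component-based (every component of an object M(A) is again isomorphic to some M(A')), and suppose the pointwise density comonad D of M exists. Then every component C of an object X admitting a D-coalgebra ξ : X ⟶ D(X) is isomorphic to M(A) for some A in A. -/

import Mathlib

open CategoryTheory Limits

universe w v

variable {B : Type v} [Category.{w} B]

/-- An object `C` is connected if every morphism from `C` into a coproduct factors
uniquely through one of the coproduct inclusions. -/
def Connected' (C : B) : Prop :=
  ∀ {I : Type w} (f : I → B) (c : Cofan f), IsColimit c →
    ∀ g : C ⟶ c.pt, ∃! p : Σ i : I, C ⟶ f i, p.2 ≫ c.inj p.1 = g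

/-- A category is componental if every object is (isomorphic to) a coproduct of
connected objects and all coproduct inclusions are monomorphisms. -/
def Componental (B : Type v) [Category.{w} B] : Prop :=
  (∀ X : B, ∃ (I : Type w) (f : I → B) (c : Cofan f),
      (∀ i, Connected' (f i)) ∧ Nonempty (IsColimit c) ∧ Nonempty (c.pt ≅ X)) ∧
  (∀ (I : Type w) (f : I → B) (c : Cofan f), Nonempty (IsColimit c) → ∀ i, Mono (c.inj i))

/-- `C` is a component of `X` if `C` is connected and `X ≅ C + Y` for some `Y`. -/
def IsComponentOf (C X : B) : Prop :=
  Connected' C ∧ ∃ (Y : B) (i₁ : C ⟶ X) (i₂ : Y ⟶ X),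
    Nonempty (IsColimit (BinaryCofan.mk i₁ i₂))

/-- Bool-indexed family for a binary cofan. -/
@[reducible]
def boolFam (C Y : B) : ULift.{w} Bool → B
  | ⟨true⟩ => C
  | ⟨false⟩ => Y

@[reducible]
def boolInj {C Y X : B} (i₁ : C ⟶ X) (i₂ : Y ⟶ X) : ∀ b, boolFam C Y b ⟶ X
  | ⟨true⟩ => i₁
  | ⟨false⟩ => i₂

def boolCofanIsColimit {C Y X : B} {i₁ : C ⟶ X} {i₂ : Y ⟶ X}
    (h : IsColimit (BinaryCofan.mk i₁ i₂)) :
    IsColimit (Cofan.mk X (boolInj i₁ i₂)) :=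
  mkCofanColimit _ (fun t => h.desc (BinaryCofan.mk (t.inj ⟨true⟩) (t.inj ⟨false⟩)))
    (fun t b => match b with
      | ⟨true⟩ => h.fac _ ⟨WalkingPair.left⟩
      | ⟨false⟩ => h.fac _ ⟨WalkingPair.right⟩)
    (fun t m hm => BinaryCofan.IsColimit.hom_ext h
      (by exact (hm ⟨true⟩).trans (h.fac (BinaryCofan.mk (t.inj ⟨true⟩) (t.inj ⟨false⟩)) ⟨WalkingPair.left⟩).symm)
      (by exact (hm ⟨false⟩).trans (h.fac (BinaryCofan.mk (t.inj ⟨true⟩) (t.inj ⟨false⟩)) ⟨WalkingPair.right⟩).symm))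

theorem splitOff {I : Type w} [HasCoproducts.{w} B] (f : I → B) (c : Cofan f)
    (hclim : IsColimit c) {X : B} (e : c.pt ≅ X) (j : I) :
    ∃ (Y : B) (i₂ : Y ⟶ X), Nonempty (IsColimit (BinaryCofan.mk (c.inj j ≫ e.hom) i₂)) := by
  classical
  refine ⟨∐ (fun i : {i : I // i ≠ j} => f i.1),
    Sigma.desc (fun i => c.inj i.1) ≫ e.hom, ⟨BinaryCofan.isColimitMk
      (fun s => e.inv ≫ Cofan.IsColimit.desc hclim (fun i =>
        if h : i = j then eqToHom (congrArg f h) ≫ s.inl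
        else Sigma.ι (fun i : {i : I // i ≠ j} => f i.1) ⟨i, h⟩ ≫ s.inr))
      ?_ ?_ ?_⟩⟩
  · intro s
    simp only [Category.assoc, Iso.hom_inv_id_assoc, Cofan.IsColimit.fac]
    rw [dif_pos trivial]
    simp
    exact Category.id_comp _
  · intro s
    simp only [Category.assoc, Iso.hom_inv_id_assoc]
    ext ⟨i, h⟩
    rw [colimit.ι_desc_assoc]
    show c.inj i ≫ Cofan.IsColimit.desc hclim _ = _
    rw [Cofan.IsColimit.fac, dif_neg h]
  · intro s m h1 h2
    symm
    rw [Iso.inv_comp_eq]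
    refine Cofan.IsColimit.hom_ext hclim _ _ (fun i => ?_)
    rw [Cofan.IsColimit.fac]
    by_cases h : i = j
    · subst h
      rw [dif_pos rfl, eqToHom_refl]
      exact (Category.id_comp _).trans (h1.symm.trans (Category.assoc _ _ _))
    · rw [dif_neg h]
      have h3 : c.inj i ≫ e.hom = Sigma.ι (fun i : {i : I // i ≠ j} => f i.1) ⟨i, h⟩ ≫
          ((Sigma.desc (fun i : {i : I // i ≠ j} => c.inj i.1)) ≫ e.hom) := by simp
      calc Sigma.ι (fun i : {i : I // i ≠ j} => f i.1) ⟨i, h⟩ ≫ s.inr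
          = Sigma.ι (fun i : {i : I // i ≠ j} => f i.1) ⟨i, h⟩ ≫
            ((Sigma.desc (fun i : {i : I // i ≠ j} => c.inj i.1)) ≫ e.hom) ≫ m := by
              rw [h2]
        _ = (c.inj i ≫ e.hom) ≫ m := by rw [← Category.assoc, ← h3]
        _ = c.inj i ≫ e.hom ≫ m := by rw [Category.assoc]

/-- for `M : A ⥤ B` from a discrete category into a componental category,
with component-based image and pointwise density comonad `D`, every component `C` of an
object `X` admitting a `D`-coalgebra `ξ : X ⟶ D(X)` is isomorphic to some `M(A)`. -/
theorem stmt_9 {J : Type w} [HasCoproducts.{w} B]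
    (M : Discrete J ⥤ B) (D : B ⥤ B)
    (ι : ∀ (A : Discrete J) {X : B}, (M.obj A ⟶ X) → (M.obj A ⟶ D.obj X))
    (hc : ∀ X : B, IsColimit (Cofan.mk (D.obj X)
      (fun p : Σ A : Discrete J, (M.obj A ⟶ X) => ι p.1 p.2)))
    (hmap : ∀ {X Y : B} (h : X ⟶ Y),
      D.map h = (hc X).desc (Cofan.mk (D.obj Y)
        (fun p : Σ A : Discrete J, (M.obj A ⟶ X) => ι p.1 (p.2 ≫ h))))
    (ε : D ⟶ 𝟭 B) (δ : D ⟶ D ⋙ D)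
    (hε : ∀ A : Discrete J, ι A (𝟙 (M.obj A)) ≫ ε.app (M.obj A) = 𝟙 (M.obj A))
    (hδ : ∀ A : Discrete J, ι A (𝟙 (M.obj A)) ≫ δ.app (M.obj A)
        = ι A (𝟙 (M.obj A)) ≫ D.map (ι A (𝟙 (M.obj A))))
    (hB : Componental B)
    (hbased : ∀ (A : Discrete J) (C' : B), IsComponentOf C' (M.obj A) →
      ∃ A' : Discrete J, Nonempty (C' ≅ M.obj A'))
    (X : B) (ξ : X ⟶ D.obj X)
    (hξ1 : ξ ≫ ε.app X = 𝟙 X)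
    (hξ2 : ξ ≫ δ.app X = ξ ≫ D.map ξ)
    (C : B) (hcomp : IsComponentOf C X) :
    ∃ A : Discrete J, Nonempty (C ≅ M.obj A) := by
  obtain ⟨hCconn, Y, i₁, i₂, ⟨hbc⟩⟩ := hcomp
  -- composition rule for the canonical injections
  have ιcomp : ∀ (A : Discrete J) {X' Y' : B} (h : M.obj A ⟶ X') (k : X' ⟶ Y'),
      ι A h ≫ D.map k = ι A (h ≫ k) := by
    intro A X' Y' h k
    rw [hmap k]
    exact (hc X').fac _ ⟨⟨A, h⟩⟩
  have monoInj : ∀ {I : Type w} (f : I → B) (c : Cofan f), IsColimit c → ∀ i, Mono (c.inj i) :=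
    fun f c hcl i => hB.2 _ f c ⟨hcl⟩ i
  -- factor i₁ ≫ ξ through the coproduct D X
  obtain ⟨⟨⟨A, f⟩, g⟩, hfac, -⟩ := hCconn
    (fun p : Σ A : Discrete J, (M.obj A ⟶ X) => M.obj p.1)
    (Cofan.mk (D.obj X) fun p : Σ A : Discrete J, (M.obj A ⟶ X) => ι p.1 p.2) (hc X) (i₁ ≫ ξ)
  have hfac : g ≫ ι A f = i₁ ≫ ξ := hfac
  -- counit computation
  have hιone : ∀ {X' : B} (k : M.obj A ⟶ X'), ι A (𝟙 (M.obj A)) ≫ D.map k = ι A k := by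
    intro X' k
    rw [ιcomp, Category.id_comp]
  have hεf : ι A f ≫ ε.app X = f := by
    rw [← hιone f, Category.assoc, ε.naturality f, ← Category.assoc, hε]
    simp
  have hgf : g ≫ f = i₁ := by
    have h1 := congrArg (· ≫ ε.app X) hfac
    simpa [Category.assoc, hεf, hξ1] using h1
  -- comultiplication computation
  have hδf : ι A f ≫ δ.app X = ι A (ι A f) := by
    rw [← hιone f, Category.assoc, δ.naturality f, ← Category.assoc, hδ, Category.assoc]
    show ι A (𝟙 _) ≫ D.map (ι A (𝟙 _)) ≫ D.map (D.map f) = _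
    rw [← D.map_comp, hιone f, hιone (ι A f)]
  have key : g ≫ ι A (ι A f) = g ≫ ι A (f ≫ ξ) := by
    have e1 : (g ≫ ι A f) ≫ δ.app X = (g ≫ ι A f) ≫ D.map ξ := by
      rw [hfac, Category.assoc, Category.assoc, hξ2]
    rw [Category.assoc, Category.assoc, hδf, ιcomp] at e1
    exact e1
  -- uniqueness of factorizations through D (D X) forces ι A f = f ≫ ξ
  have hfξ : ι A f = f ≫ ξ := by
    obtain ⟨p, -, hup⟩ := hCconn
      (fun p : Σ A : Discrete J, (M.obj A ⟶ D.obj X) => M.obj p.1)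
      (Cofan.mk (D.obj (D.obj X))
        fun p : Σ A : Discrete J, (M.obj A ⟶ D.obj X) => ι p.1 p.2)
      (hc (D.obj X)) (g ≫ ι A (ι A f))
    have e1 := hup ⟨⟨A, ι A f⟩, g⟩ rfl
    have e2 := hup ⟨⟨A, f ≫ ξ⟩, g⟩ key.symm
    have e3 := congrArg Sigma.fst (e1.trans e2.symm)
    simpa using e3
  -- decompose M A into components
  obtain ⟨I, fam, c', hconn, ⟨hclim⟩, ⟨e⟩⟩ := hB.1 (M.obj A)
  obtain ⟨⟨j, g'⟩, hg', -⟩ := hCconn fam c' hclim (g ≫ e.inv)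
  have hg' : g' ≫ c'.inj j = g ≫ e.inv := hg'
  set m : fam j ⟶ M.obj A := c'.inj j ≫ e.hom with hm
  have hgm : g' ≫ m = g := by
    rw [hm, ← Category.assoc, hg', Category.assoc]
    simp
  -- fam j is a component of M A, hence essentially in the image of M
  obtain ⟨Y', i₂', ⟨hbc'⟩⟩ := splitOff fam c' hclim e j
  obtain ⟨A', ⟨φ⟩⟩ := hbased A (fam j) ⟨hconn j, Y', m, i₂', ⟨hbc'⟩⟩
  -- factor m ≫ f through X = C + Y
  have hcbc := boolCofanIsColimit hbc
  obtain ⟨⟨b, k⟩, hk, -⟩ := hconn j (boolFam C Y) (Cofan.mk X (boolInj i₁ i₂)) hcbc (m ≫ f)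
  obtain ⟨b⟩ := b
  cases b with
  | false =>
    exfalso
    have hk : k ≫ i₂ = m ≫ f := hk
    obtain ⟨p, -, hup⟩ := hCconn (boolFam C Y) (Cofan.mk X (boolInj i₁ i₂)) hcbc i₁
    have e1 := hup ⟨⟨true⟩, 𝟙 C⟩ (Category.id_comp i₁)
    have e2 : (g' ≫ k) ≫ i₂ = i₁ := by
      rw [Category.assoc, hk, ← Category.assoc, hgm, hgf]
    have e2' := hup ⟨⟨false⟩, g' ≫ k⟩ e2
    have e3 := congrArg Sigma.fst (e1.trans e2'.symm)
    simp at e3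
  | true =>
    have hk : k ≫ i₁ = m ≫ f := hk
    have mono1 : Mono i₁ := monoInj (boolFam C Y) (Cofan.mk X (boolInj i₁ i₂)) hcbc ⟨true⟩
    have mono2 : Mono (ι A f) := monoInj
      (fun p : Σ A : Discrete J, (M.obj A ⟶ X) => M.obj p.1)
      (Cofan.mk (D.obj X) fun p : Σ A : Discrete J, (M.obj A ⟶ X) => ι p.1 p.2)
      (hc X) ⟨A, f⟩
    have mono3 : Mono m := by
      have := monoInj fam c' hclim j
      rw [hm]
      exact mono_comp _ _
    have hgk : g' ≫ k = 𝟙 C := by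
      rw [← cancel_mono i₁, Category.assoc, hk, ← Category.assoc, hgm, hgf, Category.id_comp]
    have hkg : k ≫ g = m := by
      rw [← cancel_mono (ι A f)]
      calc (k ≫ g) ≫ ι A f = k ≫ (g ≫ ι A f) := by rw [Category.assoc]
        _ = k ≫ i₁ ≫ ξ := by rw [hfac]
        _ = (k ≫ i₁) ≫ ξ := by rw [Category.assoc]
        _ = m ≫ (f ≫ ξ) := by rw [hk, Category.assoc]
        _ = m ≫ ι A f := by rw [← hfξ]
    have hkg' : k ≫ g' = 𝟙 (fam j) := by
      rw [← cancel_mono m, Category.assoc, hgm, hkg, Category.id_comp]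
    exact ⟨A', ⟨(Iso.mk g' k hgk hkg').trans φ⟩⟩
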